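/- Let P be the smallest collection of unordered pairs of angles in ℝ/ℤ containing {1/3, 2/3} and closed under {s, t} ↦ {s/2, t/2 + 1/2} and {s, t} ↦ {s/2 + 1/2, t/2}. Then for every pair {s, t} ∈ P other than {1/3, 2/3}, either both s and t lie in the open arc (1/3, 2/3), or both lie in the open arc (2/3, 4/3) (taken mod 1). In particular, no leaf of the basilica lamination crosses the minor leaf {1/3, 2/3}. -/
import Mathlib


/-- Halving using the canonical representative in `[0,1)`. -/
noncomputable def half (t : UnitAddCircle) : UnitAddCircle :=
  ((((AddCircle.equivIco 1 0) t : ℝ) / 2 : ℝ) : UnitAddCircle)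

/-- `basPair s t` means the unordered pair `{s, t}` belongs to the smallest collection
of unordered pairs of angles containing `{1/3, 2/3}` and closed under
`{s, t} ↦ {s/2, t/2 + 1/2}` and `{s, t} ↦ {s/2 + 1/2, t/2}`
(the leaves of the basilica lamination). -/
inductive basPair : UnitAddCircle → UnitAddCircle → Prop
  | base : basPair ((1 / 3 : ℝ) : UnitAddCircle) ((2 / 3 : ℝ) : UnitAddCircle)
  | symm {s t : UnitAddCircle} : basPair s t → basPair t s
  | op1 {s t : UnitAddCircle} : basPair s t →
      basPair (half s) (half t + ((1 / 2 : ℝ) : UnitAddCircle))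
  | op2 {s t : UnitAddCircle} : basPair s t →
      basPair (half s + ((1 / 2 : ℝ) : UnitAddCircle)) (half t)

lemma half_coe' {x : ℝ} (h0 : 0 ≤ x) (h1 : x < 1) :
    half ((x : ℝ) : UnitAddCircle) = ((x / 2 : ℝ) : UnitAddCircle) := by
  unfold half
  congr 1
  rw [AddCircle.coe_equivIco_mk_apply (𝕜 := ℝ) (p := 1) x, div_one,
    Int.fract_eq_self.2 ⟨h0, h1⟩, mul_one]

lemma coe_add' (x y : ℝ) :
    ((x : ℝ) : UnitAddCircle) + ((y : ℝ) : UnitAddCircle) = ((x + y : ℝ) : UnitAddCircle) := rfl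

/-- The invariant preserved by the basilica operations. -/
def basInvariant (s t : UnitAddCircle) : Prop :=
  (s = ((1 / 3 : ℝ) : UnitAddCircle) ∧ t = ((2 / 3 : ℝ) : UnitAddCircle)) ∨
  (s = ((2 / 3 : ℝ) : UnitAddCircle) ∧ t = ((1 / 3 : ℝ) : UnitAddCircle)) ∨
  (∃ x y : ℝ, s = (x : UnitAddCircle) ∧ t = (y : UnitAddCircle) ∧
    x ∈ Set.Ioo (1/3 : ℝ) (2/3) ∧ y ∈ Set.Ioo (1/3 : ℝ) (2/3)) ∨
  (∃ x y : ℝ, s = (x : UnitAddCircle) ∧ t = (y : UnitAddCircle) ∧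
    x ∈ Set.Ioo (2/3 : ℝ) 1 ∧ y ∈ Set.Ico (0 : ℝ) (1/3)) ∨
  (∃ x y : ℝ, s = (x : UnitAddCircle) ∧ t = (y : UnitAddCircle) ∧
    x ∈ Set.Ico (0 : ℝ) (1/3) ∧ y ∈ Set.Ioo (2/3 : ℝ) 1)

lemma basPair_invariant {s t : UnitAddCircle} (h : basPair s t) : basInvariant s t := by
  induction h with
  | base => exact Or.inl ⟨rfl, rfl⟩
  | symm h ih =>
    rcases ih with ⟨h1, h2⟩ | ⟨h1, h2⟩ | ⟨x, y, h1, h2, hx, hy⟩ | ⟨x, y, h1, h2, hx, hy⟩ |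
      ⟨x, y, h1, h2, hx, hy⟩
    · exact Or.inr (Or.inl ⟨h2, h1⟩)
    · exact Or.inl ⟨h2, h1⟩
    · exact Or.inr (Or.inr (Or.inl ⟨y, x, h2, h1, hy, hx⟩))
    · exact Or.inr (Or.inr (Or.inr (Or.inr ⟨y, x, h2, h1, hy, hx⟩)))
    · exact Or.inr (Or.inr (Or.inr (Or.inl ⟨y, x, h2, h1, hy, hx⟩)))
  | op1 h ih =>
    rcases ih with ⟨h1, h2⟩ | ⟨h1, h2⟩ | ⟨x, y, h1, h2, hx, hy⟩ | ⟨x, y, h1, h2, hx, hy⟩ |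
      ⟨x, y, h1, h2, hx, hy⟩
    · subst h1; subst h2
      rw [half_coe' (by norm_num) (by norm_num), half_coe' (by norm_num) (by norm_num),
        coe_add']
      exact Or.inr (Or.inr (Or.inr (Or.inr
        ⟨1/6, 2/3/2 + 1/2, by norm_num, by norm_num, by norm_num, by norm_num⟩)))
    · subst h1; subst h2
      rw [half_coe' (by norm_num) (by norm_num), half_coe' (by norm_num) (by norm_num),
        coe_add']
      exact Or.inl ⟨by norm_num, by norm_num⟩
    · subst h1; subst h2
      rw [half_coe' (by linarith [hx.1]) (by linarith [hx.2]),
        half_coe' (by linarith [hy.1]) (by linarith [hy.2]), coe_add']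
      exact Or.inr (Or.inr (Or.inr (Or.inr
        ⟨x/2, y/2 + 1/2, rfl, rfl, ⟨by linarith [hx.1], by linarith [hx.2]⟩,
          ⟨by linarith [hy.1], by linarith [hy.2]⟩⟩)))
    · subst h1; subst h2
      rw [half_coe' (by linarith [hx.1]) hx.2,
        half_coe' hy.1 (by linarith [hy.2]), coe_add']
      exact Or.inr (Or.inr (Or.inl
        ⟨x/2, y/2 + 1/2, rfl, rfl, ⟨by linarith [hx.1], by linarith [hx.2]⟩,
          ⟨by linarith [hy.1], by linarith [hy.2]⟩⟩))
    · subst h1; subst h2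
      rw [half_coe' hx.1 (by linarith [hx.2]),
        half_coe' (by linarith [hy.1]) hy.2, coe_add']
      exact Or.inr (Or.inr (Or.inr (Or.inr
        ⟨x/2, y/2 + 1/2, rfl, rfl, ⟨by linarith [hx.1], by linarith [hx.2]⟩,
          ⟨by linarith [hy.1], by linarith [hy.2]⟩⟩)))
  | op2 h ih =>
    rcases ih with ⟨h1, h2⟩ | ⟨h1, h2⟩ | ⟨x, y, h1, h2, hx, hy⟩ | ⟨x, y, h1, h2, hx, hy⟩ |
      ⟨x, y, h1, h2, hx, hy⟩
    · subst h1; subst h2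
      rw [half_coe' (by norm_num) (by norm_num), half_coe' (by norm_num) (by norm_num),
        coe_add']
      exact Or.inr (Or.inl ⟨by norm_num, by norm_num⟩)
    · subst h1; subst h2
      rw [half_coe' (by norm_num) (by norm_num), half_coe' (by norm_num) (by norm_num),
        coe_add']
      exact Or.inr (Or.inr (Or.inr (Or.inl
        ⟨2/3/2 + 1/2, 1/6, by norm_num, by norm_num, by norm_num, by norm_num⟩)))
    · subst h1; subst h2
      rw [half_coe' (by linarith [hx.1]) (by linarith [hx.2]),
        half_coe' (by linarith [hy.1]) (by linarith [hy.2]), coe_add']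
      exact Or.inr (Or.inr (Or.inr (Or.inl
        ⟨x/2 + 1/2, y/2, rfl, rfl, ⟨by linarith [hx.1], by linarith [hx.2]⟩,
          ⟨by linarith [hy.1], by linarith [hy.2]⟩⟩)))
    · subst h1; subst h2
      rw [half_coe' (by linarith [hx.1]) hx.2,
        half_coe' hy.1 (by linarith [hy.2]), coe_add']
      exact Or.inr (Or.inr (Or.inr (Or.inl
        ⟨x/2 + 1/2, y/2, rfl, rfl, ⟨by linarith [hx.1], by linarith [hx.2]⟩,
          ⟨by linarith [hy.1], by linarith [hy.2]⟩⟩)))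
    · subst h1; subst h2
      rw [half_coe' hx.1 (by linarith [hx.2]),
        half_coe' (by linarith [hy.1]) hy.2, coe_add']
      exact Or.inr (Or.inr (Or.inl
        ⟨x/2 + 1/2, y/2, rfl, rfl, ⟨by linarith [hx.1], by linarith [hx.2]⟩,
          ⟨by linarith [hy.1], by linarith [hy.2]⟩⟩))

lemma coe_add_one (x : ℝ) : ((x + 1 : ℝ) : UnitAddCircle) = ((x : ℝ) : UnitAddCircle) :=
  AddCircle.coe_add_period 1 x

/-- Every leaf of the basilica lamination other than the minor leaf `{1/3, 2/3}` has
both endpoints in the open arc `(1/3, 2/3)` or both in the open arc `(2/3, 4/3)`. -/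
theorem basilica_pair_does_not_cross_minor_leaf (s t : UnitAddCircle)
    (hst : basPair s t)
    (hne : ¬ ((s = ((1 / 3 : ℝ) : UnitAddCircle) ∧ t = ((2 / 3 : ℝ) : UnitAddCircle)) ∨
      (s = ((2 / 3 : ℝ) : UnitAddCircle) ∧ t = ((1 / 3 : ℝ) : UnitAddCircle)))) :
    (s ∈ (fun x : ℝ => ((x : UnitAddCircle))) '' Set.Ioo (1 / 3) (2 / 3) ∧
      t ∈ (fun x : ℝ => ((x : UnitAddCircle))) '' Set.Ioo (1 / 3) (2 / 3)) ∨
    (s ∈ (fun x : ℝ => ((x : UnitAddCircle))) '' Set.Ioo (2 / 3) (4 / 3) ∧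
      t ∈ (fun x : ℝ => ((x : UnitAddCircle))) '' Set.Ioo (2 / 3) (4 / 3)) := by
  rcases basPair_invariant hst with h | h | ⟨x, y, h1, h2, hx, hy⟩ | ⟨x, y, h1, h2, hx, hy⟩ |
    ⟨x, y, h1, h2, hx, hy⟩
  · exact absurd (Or.inl h) hne
  · exact absurd (Or.inr h) hne
  · exact Or.inl ⟨⟨x, hx, h1.symm⟩, ⟨y, hy, h2.symm⟩⟩
  · refine Or.inr ⟨⟨x, ⟨hx.1, by linarith [hx.2]⟩, h1.symm⟩,
      ⟨y + 1, ⟨by linarith [hy.1], by linarith [hy.2]⟩, ?_⟩⟩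
    simp only [coe_add_one]; exact h2.symm
  · refine Or.inr ⟨⟨x + 1, ⟨by linarith [hx.1], by linarith [hx.2]⟩, ?_⟩,
      ⟨y, ⟨hy.1, by linarith [hy.2]⟩, h2.symm⟩⟩
    simp only [coe_add_one]; exact h1.symm
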